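/- The vector field α is gauge invariant: for every gauge transformation T and every point (x,v), α'^k(x,v) = α^k(x,v) for all k. -/

import Mathlib

/- Coordinate formalization of extended tensor fields in v- and p-representation
   for a generalized Legendre transformation λ(x,v) = (x, L(x,v)). -/

noncomputable section

open scoped BigOperators

/-- A point of the (co)tangent bundle in a single chart: a pair (x, v) or (x, p). -/
abbrev Pt (n : ℕ) := (Fin n → ℝ) × (Fin n → ℝ)

/-- An indexed family of scalar functions (components of a (co)vector field). -/
abbrev Fam (n : ℕ) := Fin n → Pt n → ℝ

/-- Components Γ^k_{ij} of an extended connection (or of a gauge tensor T^k_{ij}). -/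
abbrev Conn (n : ℕ) := Fin n → Fin n → Fin n → Pt n → ℝ

variable {n : ℕ}

/-- Kronecker delta δ^i_j. -/
def kron (i j : Fin n) : ℝ := if i = j then 1 else 0

/-- Partial derivative ∂f/∂x^m (first slot). -/
def pdx (m : Fin n) (f : Pt n → ℝ) (q : Pt n) : ℝ :=
  fderiv ℝ f q (Pi.single m 1, 0)

/-- Partial derivative ∂f/∂v^m (resp. ∂f/∂p_m): second slot. -/
def pdv (m : Fin n) (f : Pt n → ℝ) (q : Pt n) : ℝ :=
  fderiv ℝ f q (0, Pi.single m 1)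

/-- The generalized Legendre transformation λ(x,v) = (x, L(x,v)). -/
def lam (L : Fam n) (q : Pt n) : Pt n := (q.1, fun i => L i q)

/-- The inverse map λ⁻¹(x,p) = (x, V(x,p)). -/
def lamInv (V : Fam n) (q : Pt n) : Pt n := (q.1, fun i => V i q)

/-- g_{rk} = ∂L_r/∂v^k. -/
def gdn (L : Fam n) (r k : Fin n) (q : Pt n) : ℝ := pdv k (L r) q

/-- L^i = Σ_q L_q g^{qi}. -/
def Lup (L : Fam n) (ginv : Fin n → Fin n → Pt n → ℝ) (i : Fin n) (q : Pt n) : ℝ :=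
  ∑ j, L j q * ginv j i q

/-- |L|² = Σ_s L_s L^s. -/
def L2 (L : Fam n) (ginv : Fin n → Fin n → Pt n → ℝ) (q : Pt n) : ℝ :=
  ∑ s, L s q * Lup L ginv s q

/-- p-representation: W^i = Σ_s p_s ∂V^s/∂p_i. -/
def Wp (V : Fam n) (i : Fin n) (q : Pt n) : ℝ :=
  ∑ s, q.2 s * pdv i (V s) q

/-- p-representation: Ω = Σ_s p_s W^s. -/
def Omga (V : Fam n) (q : Pt n) : ℝ := ∑ s, q.2 s * Wp V s q

/-- p-representation projector P̌^i_j = δ^i_j − W^i p_j / Ω. -/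
def Pp (V : Fam n) (i j : Fin n) (q : Pt n) : ℝ :=
  kron i j - Wp V i q * q.2 j / Omga V q

/-- v-representation projector P^i_j = δ^i_j − L^i L_j / |L|². -/
def Pv (L : Fam n) (ginv : Fin n → Fin n → Pt n → ℝ) (i j : Fin n) (q : Pt n) : ℝ :=
  kron i j - Lup L ginv i q * L j q / L2 L ginv q

/-- Scalar part of the v-representation horizontal covariant derivative:
    ∂f/∂x^m − Σ_{a,b} v^a Γ^b_{am} ∂f/∂v^b. -/
def vS (Γ : Conn n) (m : Fin n) (f : Pt n → ℝ) (q : Pt n) : ℝ :=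
  pdx m f q - ∑ a, ∑ b, q.2 a * Γ b a m q * pdv b f q

/-- v-representation ∇_m X_j of a covector field. -/
def vCov (Γ : Conn n) (m : Fin n) (X : Fam n) (j : Fin n) (q : Pt n) : ℝ :=
  vS Γ m (X j) q - ∑ b, Γ b m j q * X b q

/-- v-representation ∇_m X^i of a vector field. -/
def vVec (Γ : Conn n) (m : Fin n) (X : Fam n) (i : Fin n) (q : Pt n) : ℝ :=
  vS Γ m (X i) q + ∑ a, Γ i m a q * X a q

/-- v-representation ∇_k Y_{m r} of a (0,2) tensor field. -/
def vCov2 (Γ : Conn n) (k : Fin n) (Y : Fin n → Fin n → Pt n → ℝ)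
    (m r : Fin n) (q : Pt n) : ℝ :=
  vS Γ k (Y m r) q - (∑ b, Γ b k m q * Y b r q) - (∑ b, Γ b k r q * Y m b q)

/-- v-representation ∇_m T^k_{ij} of a (1,2) tensor field. -/
def vT12 (Γ : Conn n) (m : Fin n) (T : Conn n) (k i j : Fin n) (q : Pt n) : ℝ :=
  vS Γ m (T k i j) q + (∑ a, Γ k m a q * T a i j q)
    - (∑ b, Γ b m i q * T k b j q) - (∑ b, Γ b m j q * T k i b q)

/-- Connection components in p-representation: Γ^k_{ij} ∘ λ⁻¹. -/
def Gp (Γ : Conn n) (V : Fam n) (k i j : Fin n) (q : Pt n) : ℝ :=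
  Γ k i j (lamInv V q)

/-- Scalar part of the p-representation horizontal covariant derivative:
    ∂f/∂x^m + Σ_{a,b} p_a Γ^a_{mb} ∂f/∂p_b. -/
def pS (G : Conn n) (m : Fin n) (f : Pt n → ℝ) (q : Pt n) : ℝ :=
  pdx m f q + ∑ a, ∑ b, q.2 a * G a m b q * pdv b f q

/-- p-representation ∇_m X_j of a covector field. -/
def pCov (G : Conn n) (m : Fin n) (X : Fam n) (j : Fin n) (q : Pt n) : ℝ :=
  pS G m (X j) q - ∑ b, G b m j q * X b q

/-- p-representation ∇_m X^i of a vector field. -/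
def pVec (G : Conn n) (m : Fin n) (X : Fam n) (i : Fin n) (q : Pt n) : ℝ :=
  pS G m (X i) q + ∑ a, G i m a q * X a q

/-- Force vector F^i = Φ^i + Σ_{j,k} Γ^i_{jk} v^j v^k. -/
def Fvec (Γ : Conn n) (Φ : Fam n) (i : Fin n) (q : Pt n) : ℝ :=
  Φ i q + ∑ j, ∑ k, Γ i j k q * q.2 j * q.2 k

/-- Force covector F_q = Σ_i g_{qi} F^i. -/
def Fcov (L : Fam n) (Γ : Conn n) (Φ : Fam n) (i : Fin n) (q : Pt n) : ℝ :=
  ∑ j, gdn L i j q * Fvec Γ Φ j q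

/-- p-representation force covector Q_i = Θ_i − Σ_{j,k} Γ^k_{ij} V^j p_k. -/
def Qp (Θ : Fam n) (Γ : Conn n) (V : Fam n) (i : Fin n) (q : Pt n) : ℝ :=
  Θ i q - ∑ j, ∑ k, Gp Γ V k i j q * V j q * q.2 k

/-- p-representation covector Ǔ_i = Q_i + Σ_s (∇_i V^s) p_s. -/
def Ucheck (Θ : Fam n) (Γ : Conn n) (V : Fam n) (i : Fin n) (q : Pt n) : ℝ :=
  Qp Θ Γ V i q + ∑ s, pVec (Gp Γ V) i V s q * q.2 s

/-- v-representation covector U_i = Σ_q v^q ∇_q L_i − Σ_q L^q ∇_i L_q + F_i. -/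
def Uv (L : Fam n) (ginv : Fin n → Fin n → Pt n → ℝ) (Γ : Conn n) (Φ : Fam n)
    (i : Fin n) (q : Pt n) : ℝ :=
  (∑ j, q.2 j * vCov Γ j L i q) - (∑ j, Lup L ginv j q * vCov Γ i L j q) + Fcov L Γ Φ i q

/-- v-representation dynamic curvature tensor D^k_{rij} = −∂Γ^k_{ir}/∂v^j. -/
def Dv (Γ : Conn n) (k r i j : Fin n) (q : Pt n) : ℝ := -(pdv j (Γ k i r) q)

/-- v-representation curvature tensor R^k_{rij}. -/
def Rv (Γ : Conn n) (k r i j : Fin n) (q : Pt n) : ℝ :=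
  pdx i (Γ k j r) q - pdx j (Γ k i r) q
  + (∑ m, (Γ k i m q * Γ m j r q - Γ k j m q * Γ m i r q))
  - (∑ m, ∑ s, q.2 s * Γ m i s q * pdv m (Γ k j r) q)
  + (∑ m, ∑ s, q.2 s * Γ m j s q * pdv m (Γ k i r) q)

/-- p-representation dynamic curvature tensor Ď^{kr}_{ij} = −∂Γ^k_{ij}/∂p_r. -/
def Dp (G : Conn n) (k r i j : Fin n) (q : Pt n) : ℝ := -(pdv r (G k i j) q)

/-- p-representation curvature tensor Ř^k_{rij}. -/
def Rp (G : Conn n) (k r i j : Fin n) (q : Pt n) : ℝ :=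
  pdx i (G k j r) q - pdx j (G k i r) q
  + (∑ m, (G k i m q * G m j r q - G k j m q * G m i r q))
  + (∑ m, ∑ s, q.2 s * G s m i q * pdv m (G k j r) q)
  - (∑ m, ∑ s, q.2 s * G s m j q * pdv m (G k i r) q)

/-- p-representation vector field α̌^k. -/
def alphaCheck (Θ : Fam n) (Γ : Conn n) (V : Fam n) (k : Fin n) (q : Pt n) : ℝ :=
  (∑ r, pdv k (V r) q * Ucheck Θ Γ V r q)
  + (∑ r, pVec (Gp Γ V) r (Wp V) k q * V r q)
  + (∑ r, pdv r (Wp V k) q * Qp Θ Γ V r q)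
  + (∑ r, Wp V r q * pdv k (Qp Θ Γ V r) q)
  - (∑ r, ∑ s, ∑ j, q.2 s * Dp (Gp Γ V) s k r j q * Wp V r q * V j q)

/-- v-representation vector field α^k. -/
def alphaV (L : Fam n) (ginv : Fin n → Fin n → Pt n → ℝ) (Γ : Conn n) (Φ : Fam n)
    (k : Fin n) (q : Pt n) : ℝ :=
  (∑ r, ginv r k q * Uv L ginv Γ Φ r q)
  + (∑ r, q.2 r * vVec Γ r (Lup L ginv) k q)
  + (∑ j, Fvec Γ Φ j q * pdv j (Lup L ginv k) q)
  + (∑ j, ∑ r, ∑ s, Lup L ginv r q * ginv j k q * q.2 s * pdv j (vCov Γ s L r) q)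
  + (∑ j, ∑ r, Lup L ginv r q * ginv j k q * pdv j (Fcov L Γ Φ r) q)
  + (∑ j, ∑ r, Lup L ginv r q * ginv j k q * vCov Γ j L r q)
  - (∑ j, ∑ m, ∑ r, ∑ s, ginv m k q * L s q * Dv Γ s r j m q * Lup L ginv r q * q.2 j)

/-- p-representation covector field β̌_k. -/
def betaCheck (Θ : Fam n) (Γ : Conn n) (V : Fam n) (k : Fin n) (q : Pt n) : ℝ :=
  (∑ r, pCov (Gp Γ V) r (Ucheck Θ Γ V) k q * V r q)
  + (∑ r, pdv r (Ucheck Θ Γ V k) q * Qp Θ Γ V r q)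
  + (∑ r, pVec (Gp Γ V) k V r q * Ucheck Θ Γ V r q)
  + (∑ r, pCov (Gp Γ V) k (Qp Θ Γ V) r q * Wp V r q)
  - (∑ r, ∑ s, ∑ m, (Rp (Gp Γ V) s r m k q * V m q
      - Dp (Gp Γ V) s m r k q * Qp Θ Γ V m q) * Wp V r q * q.2 s)

/-- v-representation covector field β_k. -/
def betaV (L : Fam n) (ginv : Fin n → Fin n → Pt n → ℝ) (Γ : Conn n) (Φ : Fam n)
    (k : Fin n) (q : Pt n) : ℝ :=
  (∑ r, q.2 r * vCov Γ r (Uv L ginv Γ Φ) k q)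
  + (∑ j, Fvec Γ Φ j q * pdv j (Uv L ginv Γ Φ k) q)
  - (∑ j, ∑ r, ∑ s, vCov Γ k L j q * ginv r j q * q.2 s * vCov Γ s L r q)
  - (∑ j, ∑ r, vCov Γ k L j q * ginv r j q * Fcov L Γ Φ r q)
  + (∑ r, Lup L ginv r q * vCov Γ k (Fcov L Γ Φ) r q)
  + (∑ m, ∑ r, Lup L ginv r q * q.2 m * vCov2 Γ k (fun m' r' => vCov Γ m' L r') m r q)
  - (∑ j, ∑ r, ∑ s, Lup L ginv r q * vCov Γ k L j q * ginv s j q * pdv s (Fcov L Γ Φ r) q)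
  - (∑ j, ∑ m, ∑ r, ∑ s, Lup L ginv r q * vCov Γ k L j q * ginv s j q * q.2 m
      * pdv s (vCov Γ m L r) q)
  - (∑ r, ∑ s, ∑ m, Rv Γ s r m k q * q.2 m * Lup L ginv r q * L s q)
  + (∑ j, ∑ r, ∑ s, ∑ m, ∑ a, ginv a j q * vCov Γ k L j q * Dv Γ s m r a q * q.2 m
      * Lup L ginv r q * L s q)
  + (∑ r, ∑ s, ∑ m, ∑ a, ginv a m q * Dv Γ s r k a q * Fcov L Γ Φ m q
      * Lup L ginv r q * L s q)

/-- v-representation covector field η_k = β_k − Σ_s U_k α^s L_s / |L|². -/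
def etaV (L : Fam n) (ginv : Fin n → Fin n → Pt n → ℝ) (Γ : Conn n) (Φ : Fam n)
    (k : Fin n) (q : Pt n) : ℝ :=
  betaV L ginv Γ Φ k q
    - ∑ s, Uv L ginv Γ Φ k q * alphaV L ginv Γ Φ s q * L s q / L2 L ginv q

/-- p-representation tensor Ǎ^{rs} = ∂W^s/∂p_r. -/
def Acheck (V : Fam n) (r s : Fin n) (q : Pt n) : ℝ := pdv r (Wp V s) q

/-- v-representation tensor A^{rs} = Σ_q g^{qr} ∂L^s/∂v^q. -/
def Av (L : Fam n) (ginv : Fin n → Fin n → Pt n → ℝ) (r s : Fin n) (q : Pt n) : ℝ :=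
  ∑ j, ginv j r q * pdv j (Lup L ginv s) q

/-- p-representation tensor B̌^r_s. -/
def Bcheck (Θ : Fam n) (Γ : Conn n) (V : Fam n) (r s : Fin n) (q : Pt n) : ℝ :=
  pdv r (Ucheck Θ Γ V s) q
  + (∑ m, ∑ k, Wp V k q * q.2 m * Dp (Gp Γ V) m r k s q)
  - pVec (Gp Γ V) s (Wp V) r q
  + (∑ m, (pdv m (Wp V r) q - pdv r (Wp V m) q) * Ucheck Θ Γ V s q * q.2 m / Omga V q)

/-- v-representation tensor B^r_s. -/
def Bv (L : Fam n) (ginv : Fin n → Fin n → Pt n → ℝ) (Γ : Conn n) (Φ : Fam n)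
    (r s : Fin n) (q : Pt n) : ℝ :=
  (∑ j, ginv j r q * pdv j (Uv L ginv Γ Φ s) q)
  + (∑ m, ∑ k, ∑ j, ginv j r q * Lup L ginv k q * L m q * Dv Γ m k s j q)
  - vVec Γ s (Lup L ginv) r q
  + (∑ j, ∑ k, vCov Γ s L k q * ginv j k q * pdv j (Lup L ginv r) q)
  + (∑ j, ∑ m, (ginv j m q * pdv j (Lup L ginv r) q - ginv j r q * pdv j (Lup L ginv m) q)
      * Uv L ginv Γ Φ s q * L m q / L2 L ginv q)

/-- p-representation tensor Č_{rs}. -/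
def Ccheck (Θ : Fam n) (Γ : Conn n) (V : Fam n) (r s : Fin n) (q : Pt n) : ℝ :=
  pCov (Gp Γ V) r (Ucheck Θ Γ V) s q
  - (∑ m, (Ucheck Θ Γ V r q * pdv m (Ucheck Θ Γ V s) q
      + Ucheck Θ Γ V s q * pVec (Gp Γ V) r (Wp V) m q) * q.2 m / Omga V q)
  - (∑ k, ∑ j, ((∑ m, Dp (Gp Γ V) m j k s q * Ucheck Θ Γ V r q * q.2 m / Omga V q)
      + Rp (Gp Γ V) j k r s q / 2) * Wp V k q * q.2 j)

/-- v-representation tensor C_{rs}. -/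
def Cv (L : Fam n) (ginv : Fin n → Fin n → Pt n → ℝ) (Γ : Conn n) (Φ : Fam n)
    (r s : Fin n) (q : Pt n) : ℝ :=
  vCov Γ r (Uv L ginv Γ Φ) s q
  - (∑ j, ∑ k, vCov Γ r L j q * ginv k j q * pdv k (Uv L ginv Γ Φ s) q)
  - (∑ m, Uv L ginv Γ Φ s q * vVec Γ r (Lup L ginv) m q * L m q / L2 L ginv q)
  - (∑ j, ∑ m, Uv L ginv Γ Φ r q * ginv j m q * pdv j (Uv L ginv Γ Φ s) q * L m q
      / L2 L ginv q)
  + (∑ m, ∑ j, ∑ k, Uv L ginv Γ Φ s q * vCov Γ r L k q * ginv j k q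
      * pdv j (Lup L ginv m) q * L m q / L2 L ginv q)
  - (∑ k, ∑ j, ∑ m, ∑ a, ginv a j q * Dv Γ m k s a q * Uv L ginv Γ Φ r q * L m q
      * Lup L ginv k q * L j q / L2 L ginv q)
  - (∑ k, ∑ j, (Rv Γ j k r s q / 2) * Lup L ginv k q * L j q)
  - (∑ k, ∑ j, ∑ m, ∑ a, vCov Γ r L m q * Dv Γ j k s a q * ginv a m q
      * Lup L ginv k q * L j q)

/-- Gauge-transformed connection Γ' = Γ + T. -/
def addT (Γ T : Conn n) : Conn n := fun k i j q => Γ k i j q + T k i j q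

/-- The quantity Ξ_{rs} appearing in the gauge transformation rule for C. -/
def XiG (L : Fam n) (ginv : Fin n → Fin n → Pt n → ℝ) (Γ : Conn n) (Φ : Fam n)
    (T : Conn n) (r s : Fin n) (q : Pt n) : ℝ :=
  (∑ j, ∑ b, ∑ m, T b r j q * L b q * Pv L ginv j m q * Bv L ginv Γ Φ m s q)
  + (∑ j, ∑ b, ∑ m, ∑ a, ∑ c, ∑ e, T b r j q * L b q * Pv L ginv j m q
      * Av L ginv m a q * Pv L ginv c a q * T e s c q * L e q)

end
noncomputable section GaugeAux

open Finset

variable {n : ℕ}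

/-- Abbreviation for smoothness. -/
def CDf (f : Pt n → ℝ) : Prop := ContDiff ℝ (⊤ : ℕ∞) f

lemma contDiff_pdv {f : Pt n → ℝ} (hf : CDf f) (m : Fin n) : CDf (pdv m f) :=
  (hf.fderiv_right (le_refl _)).clm_apply contDiff_const

lemma contDiff_pdx {f : Pt n → ℝ} (hf : CDf f) (m : Fin n) : CDf (pdx m f) :=
  (hf.fderiv_right (le_refl _)).clm_apply contDiff_const

lemma CDf.dAt {f : Pt n → ℝ} (hf : CDf f) (q : Pt n) : DifferentiableAt ℝ f q :=
  (hf.differentiable (by simp)) q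

lemma contDiff_coord (a : Fin n) : CDf (fun q : Pt n => q.2 a) :=
  (ContinuousLinearMap.proj a |>.comp
    (ContinuousLinearMap.snd ℝ (Fin n → ℝ) (Fin n → ℝ))).contDiff

lemma CDf.mul {f g : Pt n → ℝ} (hf : CDf f) (hg : CDf g) :
    CDf (fun q => f q * g q) := ContDiff.mul hf hg

lemma CDf.add {f g : Pt n → ℝ} (hf : CDf f) (hg : CDf g) :
    CDf (fun q => f q + g q) := ContDiff.add hf hg

lemma CDf.sub {f g : Pt n → ℝ} (hf : CDf f) (hg : CDf g) :
    CDf (fun q => f q - g q) := ContDiff.sub hf hg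

lemma CDf.sum {ι : Type*} {s : Finset ι} {f : ι → Pt n → ℝ}
    (hf : ∀ i ∈ s, CDf (f i)) : CDf (fun q => ∑ i ∈ s, f i q) :=
  ContDiff.sum hf

lemma pdv_add {f g : Pt n → ℝ} {q : Pt n} (hf : DifferentiableAt ℝ f q)
    (hg : DifferentiableAt ℝ g q) (m : Fin n) :
    pdv m (fun q => f q + g q) q = pdv m f q + pdv m g q := by
  unfold pdv; rw [fderiv_fun_add hf hg]; rfl

lemma pdv_sub {f g : Pt n → ℝ} {q : Pt n} (hf : DifferentiableAt ℝ f q)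
    (hg : DifferentiableAt ℝ g q) (m : Fin n) :
    pdv m (fun q => f q - g q) q = pdv m f q - pdv m g q := by
  unfold pdv; rw [fderiv_fun_sub hf hg]; rfl

lemma pdv_mul {f g : Pt n → ℝ} {q : Pt n} (hf : DifferentiableAt ℝ f q)
    (hg : DifferentiableAt ℝ g q) (m : Fin n) :
    pdv m (fun q => f q * g q) q = pdv m f q * g q + f q * pdv m g q := by
  unfold pdv; rw [fderiv_fun_mul hf hg]; simp; ring

lemma pdv_sum {ι : Type*} (s : Finset ι) {f : ι → Pt n → ℝ} {q : Pt n}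
    (hf : ∀ i ∈ s, DifferentiableAt ℝ (f i) q) (m : Fin n) :
    pdv m (fun q => ∑ i ∈ s, f i q) q = ∑ i ∈ s, pdv m (f i) q := by
  unfold pdv; rw [fderiv_fun_sum hf]; simp

lemma pdv_coord (m a : Fin n) (q : Pt n) :
    pdv m (fun q : Pt n => q.2 a) q = if a = m then 1 else 0 := by
  unfold pdv
  rw [show (fun q : Pt n => q.2 a) = (ContinuousLinearMap.proj a |>.comp
    (ContinuousLinearMap.snd ℝ (Fin n → ℝ) (Fin n → ℝ))) from rfl,
    ContinuousLinearMap.fderiv]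
  simp [Pi.single_apply]

lemma gdn_eq (L : Fam n) (r k : Fin n) : gdn L r k = pdv k (L r) := rfl

section Smooth

variable {L : Fam n} {ginv : Fin n → Fin n → Pt n → ℝ} {Γ : Conn n} {Φ : Fam n}
  {T : Conn n}
variable (hL : ∀ i, CDf (L i)) (hginvSm : ∀ i j, CDf (ginv i j))
  (hΓ : ∀ k i j, CDf (Γ k i j)) (hΦ : ∀ i, CDf (Φ i)) (hT : ∀ k i j, CDf (T k i j))

include hL in
lemma cd_gdn (r k : Fin n) : CDf (gdn L r k) := contDiff_pdv (hL r) k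

include hL hginvSm in
lemma cd_Lup (i : Fin n) : CDf (Lup L ginv i) :=
  CDf.sum fun j _ => (hL j).mul (hginvSm j i)

include hL hΓ in
lemma cd_vCov (m i : Fin n) : CDf (fun q => vCov Γ m L i q) := by
  unfold vCov vS
  apply CDf.sub
  · apply CDf.sub (contDiff_pdx (hL i) m)
    exact CDf.sum fun a _ => CDf.sum fun b _ =>
      (((contDiff_coord a).mul (hΓ b a m)).mul (contDiff_pdv (hL i) b))
  · exact CDf.sum fun b _ => (hΓ b m i).mul (hL b)

include hΓ hΦ in
lemma cd_Fvec (j : Fin n) : CDf (fun q => Fvec Γ Φ j q) := by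
  unfold Fvec
  exact (hΦ j).add (CDf.sum fun a _ => CDf.sum fun b _ =>
    (((hΓ j a b).mul (contDiff_coord a)).mul (contDiff_coord b)))

include hL hΓ hΦ in
lemma cd_Fcov (i : Fin n) : CDf (fun q => Fcov L Γ Φ i q) := by
  unfold Fcov
  exact CDf.sum fun j _ => (cd_gdn hL i j).mul (cd_Fvec hΓ hΦ j)

end Smooth

end GaugeAux
noncomputable section GaugeAux2

open Finset

variable {n : ℕ}

/-- Correction term for vCov under gauge transformation. -/
def gX (L : Fam n) (T : Conn n) (m i : Fin n) (q : Pt n) : ℝ :=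
  (∑ a, ∑ b, q.2 a * T b a m q * gdn L i b q) + ∑ b, T b m i q * L b q

/-- Correction term for Fcov under gauge transformation. -/
def gY (L : Fam n) (T : Conn n) (i : Fin n) (q : Pt n) : ℝ :=
  ∑ b, gdn L i b q * (∑ a, ∑ c, T b a c q * q.2 a * q.2 c)

lemma sum_comm3 {M : Type*} [AddCommMonoid M] (f : Fin n → Fin n → Fin n → M) :
    ∑ a, ∑ b, ∑ c, f a b c = ∑ b, ∑ c, ∑ a, f a b c := by
  rw [Finset.sum_comm]
  exact Finset.sum_congr rfl fun b _ => Finset.sum_comm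

lemma sum_comm3' {M : Type*} [AddCommMonoid M] (f : Fin n → Fin n → Fin n → M) :
    ∑ a, ∑ b, ∑ c, f a b c = ∑ c, ∑ a, ∑ b, f a b c := by
  rw [sum_comm3, sum_comm3]

section Main

variable {L : Fam n} {ginv : Fin n → Fin n → Pt n → ℝ} {Γ : Conn n} {Φ : Fam n}
  {T : Conn n}

lemma vCov_addT (m i : Fin n) (q : Pt n) :
    vCov (addT Γ T) m L i q = vCov Γ m L i q - gX L T m i q := by
  unfold vCov vS addT gX gdn
  simp only [add_mul, mul_add, Finset.sum_add_distrib]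
  ring

lemma Fvec_addT (Φ : Fam n) (j : Fin n) (q : Pt n) :
    Fvec (addT Γ T) Φ j q = Fvec Γ Φ j q + ∑ a, ∑ b, T j a b q * q.2 a * q.2 b := by
  unfold Fvec addT
  simp only [add_mul, Finset.sum_add_distrib]
  ring

lemma Fcov_addT (i : Fin n) (q : Pt n) :
    Fcov L (addT Γ T) Φ i q = Fcov L Γ Φ i q + gY L T i q := by
  unfold Fcov gY
  simp only [Fvec_addT, mul_add, Finset.sum_add_distrib]

lemma vVec_addT (X : Fam n) (r k : Fin n) (q : Pt n) :
    vVec (addT Γ T) r X k q = vVec Γ r X k q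
      - (∑ a, ∑ b, q.2 a * T b a r q * pdv b (X k) q) + ∑ a, T k r a q * X a q := by
  unfold vVec vS addT
  simp only [add_mul, mul_add, Finset.sum_add_distrib]
  ring

lemma Dv_addT (hΓ : ∀ k i j, CDf (Γ k i j)) (hT : ∀ k i j, CDf (T k i j))
    (s r i j : Fin n) (q : Pt n) :
    Dv (addT Γ T) s r i j q = Dv Γ s r i j q - pdv j (T s i r) q := by
  unfold Dv addT
  rw [pdv_add ((hΓ s i r).dAt q) ((hT s i r).dAt q)]
  ring

lemma sum_mul_kron (f : Fin n → ℝ) (b : Fin n) : ∑ c, f c * kron c b = f b := by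
  simp [kron, mul_ite, Finset.sum_ite_eq']

lemma Lup_gdn (hginv : ∀ (q : Pt n) (s k : Fin n),
      (∑ r, ginv s r q * gdn L r k q) = kron s k) (q : Pt n) (b : Fin n) :
    ∑ j, Lup L ginv j q * gdn L j b q = L b q := by
  unfold Lup
  simp only [Finset.sum_mul]
  rw [Finset.sum_comm]
  calc ∑ c, ∑ j, L c q * ginv c j q * gdn L j b q
      = ∑ c, L c q * ∑ j, ginv c j q * gdn L j b q := by
        exact Finset.sum_congr rfl fun c _ => by rw [Finset.mul_sum]; exact Finset.sum_congr rfl fun j _ => by ring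
    _ = ∑ c, L c q * kron c b := by simp only [hginv]
    _ = L b q := by simp [kron, mul_ite, Finset.sum_ite_eq']

lemma gdn_ginv (hginv : ∀ (q : Pt n) (s k : Fin n),
      (∑ r, ginv s r q * gdn L r k q) = kron s k) (q : Pt n) (b k : Fin n) :
    ∑ j, gdn L b j q * ginv j k q = kron b k := by
  have h : (Matrix.of fun s r => ginv s r q) * (Matrix.of fun r k => gdn L r k q) = 1 := by
    ext s k
    rw [Matrix.mul_apply]
    simpa [Matrix.one_apply, kron] using hginv q s k
  have h2 := mul_eq_one_comm.mp h
  have := congrFun (congrFun h2 b) k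
  rw [Matrix.mul_apply] at this
  simpa [Matrix.one_apply, kron] using this

end Main

end GaugeAux2
noncomputable section GaugeAux3

open Finset

variable {n : ℕ}
variable {L : Fam n} {ginv : Fin n → Fin n → Pt n → ℝ} {Γ : Conn n} {Φ : Fam n}
  {T : Conn n}

section Corr

variable (hginv : ∀ (q : Pt n) (s k : Fin n),
    (∑ r, ginv s r q * gdn L r k q) = kron s k)

include hginv in
lemma corrGX (i : Fin n) (q : Pt n) :
    (∑ j, Lup L ginv j q * gX L T i j q) + gY L T i q - (∑ j, q.2 j * gX L T j i q)
      = ∑ j, ∑ b, Lup L ginv j q * (T b i j q * L b q) := by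
  unfold gX gY
  have hA1C : ∑ j, ∑ a, ∑ b, q.2 j * (q.2 a * T b a j q * gdn L i b q)
      = ∑ b, ∑ a, ∑ c, gdn L i b q * (T b a c q * q.2 a * q.2 c) := by
    rw [sum_comm3 (fun j a b => q.2 j * (q.2 a * T b a j q * gdn L i b q)),
      Finset.sum_comm]
    exact Finset.sum_congr rfl fun b _ => Finset.sum_congr rfl fun a _ =>
      Finset.sum_congr rfl fun j _ => by ring
  have hB1A2 : ∑ j, ∑ a, ∑ b, Lup L ginv j q * (q.2 a * T b a i q * gdn L j b q)
      = ∑ j, ∑ b, q.2 j * (T b j i q * L b q) := by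
    rw [sum_comm3 (fun j a b => Lup L ginv j q * (q.2 a * T b a i q * gdn L j b q))]
    refine Finset.sum_congr rfl fun a _ => Finset.sum_congr rfl fun b _ => ?_
    have : ∑ j, Lup L ginv j q * (q.2 a * T b a i q * gdn L j b q)
        = (q.2 a * T b a i q) * ∑ j, Lup L ginv j q * gdn L j b q := by
      rw [Finset.mul_sum]; exact Finset.sum_congr rfl fun j _ => by ring
    rw [this, Lup_gdn hginv]
    ring
  simp only [mul_add, Finset.mul_sum, Finset.sum_add_distrib]
  linarith [hA1C, hB1A2]

include hginv in
lemma Uv_addT (i : Fin n) (q : Pt n) :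
    Uv L ginv (addT Γ T) Φ i q = Uv L ginv Γ Φ i q
      + ∑ j, ∑ b, Lup L ginv j q * (T b i j q * L b q) := by
  unfold Uv
  simp only [vCov_addT, Fcov_addT]
  rw [← corrGX hginv i q]
  simp only [mul_sub, Finset.sum_sub_distrib]
  ring

end Corr

section PdvCorr

variable (hL : ∀ i, CDf (L i)) (hT : ∀ k i j, CDf (T k i j))

include hL hT in
lemma cd_gX (s r : Fin n) : CDf (fun q => gX L T s r q) := by
  unfold gX
  exact (CDf.sum fun a _ => CDf.sum fun b _ =>
      ((contDiff_coord a).mul (hT b a s)).mul (cd_gdn hL r b)).add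
    (CDf.sum fun b _ => (hT b s r).mul (hL b))

include hL hT in
lemma cd_gY (r : Fin n) : CDf (fun q => gY L T r q) := by
  unfold gY
  exact CDf.sum fun b _ => (cd_gdn hL r b).mul
    (CDf.sum fun a _ => CDf.sum fun c _ =>
      ((hT b a c).mul (contDiff_coord a)).mul (contDiff_coord c))

include hL hT in
lemma pdv_gX (j s r : Fin n) (q : Pt n) :
    pdv j (gX L T s r) q
      = (∑ a, ∑ b, (((if a = j then 1 else 0) * T b a s q + q.2 a * pdv j (T b a s) q)
            * gdn L r b q + q.2 a * T b a s q * pdv j (gdn L r b) q))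
        + ∑ b, (pdv j (T b s r) q * L b q + T b s r q * gdn L b j q) := by
  unfold gX
  rw [pdv_add ((CDf.sum fun a _ => CDf.sum fun b _ =>
      ((contDiff_coord a).mul (hT b a s)).mul (cd_gdn hL r b)).dAt q)
    ((CDf.sum fun b _ => (hT b s r).mul (hL b)).dAt q)]
  congr 1
  · rw [pdv_sum univ (fun a _ => (CDf.sum fun b _ =>
      ((contDiff_coord a).mul (hT b a s)).mul (cd_gdn hL r b)).dAt q)]
    refine Finset.sum_congr rfl fun a _ => ?_
    rw [pdv_sum univ (fun b _ =>
      (((contDiff_coord a).mul (hT b a s)).mul (cd_gdn hL r b)).dAt q)]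
    refine Finset.sum_congr rfl fun b _ => ?_
    rw [pdv_mul (((contDiff_coord a).mul (hT b a s)).dAt q) ((cd_gdn hL r b).dAt q),
      pdv_mul ((contDiff_coord a).dAt q) ((hT b a s).dAt q), pdv_coord]
  · rw [pdv_sum univ (fun b _ => ((hT b s r).mul (hL b)).dAt q)]
    refine Finset.sum_congr rfl fun b _ => ?_
    rw [pdv_mul ((hT b s r).dAt q) ((hL b).dAt q)]
    rfl

include hL hT in
lemma pdv_gY (j r : Fin n) (q : Pt n) :
    pdv j (gY L T r) q
      = ∑ b, (pdv j (gdn L r b) q * (∑ a, ∑ c, T b a c q * q.2 a * q.2 c)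
          + gdn L r b q * (∑ a, ∑ c, ((pdv j (T b a c) q * q.2 a
              + T b a c q * (if a = j then 1 else 0)) * q.2 c
            + T b a c q * q.2 a * (if c = j then 1 else 0)))) := by
  unfold gY
  rw [pdv_sum univ (fun b _ => ((cd_gdn hL r b).mul
      (CDf.sum fun a _ => CDf.sum fun c _ =>
        ((hT b a c).mul (contDiff_coord a)).mul (contDiff_coord c))).dAt q)]
  refine Finset.sum_congr rfl fun b _ => ?_
  rw [pdv_mul ((cd_gdn hL r b).dAt q) ((CDf.sum fun a _ => CDf.sum fun c _ =>
      ((hT b a c).mul (contDiff_coord a)).mul (contDiff_coord c)).dAt q)]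
  congr 2
  rw [pdv_sum univ (fun a _ => (CDf.sum fun c _ =>
      ((hT b a c).mul (contDiff_coord a)).mul (contDiff_coord c)).dAt q)]
  refine Finset.sum_congr rfl fun a _ => ?_
  rw [pdv_sum univ (fun c _ =>
      (((hT b a c).mul (contDiff_coord a)).mul (contDiff_coord c)).dAt q)]
  refine Finset.sum_congr rfl fun c _ => ?_
  rw [pdv_mul (((hT b a c).mul (contDiff_coord a)).dAt q) ((contDiff_coord c).dAt q),
    pdv_mul ((hT b a c).dAt q) ((contDiff_coord a).dAt q), pdv_coord, pdv_coord]

end PdvCorr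

end GaugeAux3
noncomputable section GaugeAux4

open Finset

variable {n : ℕ}

lemma sumc {f g : Fin n → ℝ} (h : ∀ a, f a = g a) : ∑ a, f a = ∑ a, g a :=
  Finset.sum_congr rfl fun a _ => h a

lemma sum_delta (f : Fin n → ℝ) (j : Fin n) :
    (∑ a, (if a = j then 1 else 0) * f a) = f j := by simp [ite_mul]

lemma sum_delta' (f : Fin n → ℝ) (j : Fin n) :
    (∑ a, f a * (if a = j then 1 else 0)) = f j := by simp [mul_ite]

lemma sum_swap13 {M : Type*} [AddCommMonoid M] (f : Fin n → Fin n → Fin n → M) :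
    ∑ a, ∑ b, ∑ c, f a b c = ∑ c, ∑ b, ∑ a, f a b c := by
  rw [sum_comm3]; exact Finset.sum_comm

lemma sum_rot4 {M : Type*} [AddCommMonoid M] (f : Fin n → Fin n → Fin n → Fin n → M) :
    ∑ a, ∑ b, ∑ c, ∑ d, f a b c d = ∑ b, ∑ c, ∑ d, ∑ a, f a b c d := by
  rw [Finset.sum_comm]
  refine Finset.sum_congr rfl fun b _ => ?_
  rw [Finset.sum_comm]
  exact Finset.sum_congr rfl fun c _ => Finset.sum_comm

variable {L : Fam n} {T : Conn n}
variable (hL : ∀ i, CDf (L i)) (hT : ∀ k i j, CDf (T k i j))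

include hL hT in
lemma pdv_gX' (j s r : Fin n) (q : Pt n) :
    pdv j (gX L T s r) q
      = (∑ b, T b j s q * gdn L r b q)
        + (∑ a, ∑ b, q.2 a * pdv j (T b a s) q * gdn L r b q)
        + (∑ a, ∑ b, q.2 a * T b a s q * pdv j (gdn L r b) q)
        + ((∑ b, pdv j (T b s r) q * L b q)
        + (∑ b, T b s r q * gdn L b j q)) := by
  rw [pdv_gX hL hT]
  have h1 : (∑ a, ∑ b, (((if a = j then 1 else 0) * T b a s q
        + q.2 a * pdv j (T b a s) q) * gdn L r b q
        + q.2 a * T b a s q * pdv j (gdn L r b) q))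
      = (∑ a, ∑ b, ((if a = j then 1 else 0) * T b a s q) * gdn L r b q)
        + (∑ a, ∑ b, q.2 a * pdv j (T b a s) q * gdn L r b q)
        + (∑ a, ∑ b, q.2 a * T b a s q * pdv j (gdn L r b) q) := by
    simp only [add_mul, Finset.sum_add_distrib]
  have h2 : (∑ a, ∑ b, ((if a = j then 1 else 0) * T b a s q) * gdn L r b q)
      = ∑ b, T b j s q * gdn L r b q := by
    have hstep : ∀ a, (∑ b, ((if a = j then 1 else 0) * T b a s q) * gdn L r b q)
        = (if a = j then 1 else 0) * ∑ b, T b a s q * gdn L r b q := fun a => by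
      rw [Finset.mul_sum]; exact sumc fun b => by ring
    rw [sumc hstep, sum_delta]
  rw [h1, h2, Finset.sum_add_distrib]

include hL hT in
lemma pdv_gY' (j r : Fin n) (q : Pt n) :
    pdv j (gY L T r) q
      = (∑ b, pdv j (gdn L r b) q * (∑ a, ∑ c, T b a c q * q.2 a * q.2 c))
        + ((∑ b, ∑ a, ∑ c, gdn L r b q * (pdv j (T b a c) q * q.2 a * q.2 c))
        + ((∑ b, ∑ c, gdn L r b q * (T b j c q * q.2 c))
        + (∑ b, ∑ a, gdn L r b q * (T b a j q * q.2 a)))) := by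
  rw [pdv_gY hL hT]
  have hinner : ∀ b, (∑ a, ∑ c, ((pdv j (T b a c) q * q.2 a
        + T b a c q * (if a = j then 1 else 0)) * q.2 c
        + T b a c q * q.2 a * (if c = j then 1 else 0)))
      = (∑ a, ∑ c, pdv j (T b a c) q * q.2 a * q.2 c)
        + ((∑ c, T b j c q * q.2 c) + (∑ a, T b a j q * q.2 a)) := by
    intro b
    have hsplit : (∑ a, ∑ c, ((pdv j (T b a c) q * q.2 a
          + T b a c q * (if a = j then 1 else 0)) * q.2 c
          + T b a c q * q.2 a * (if c = j then 1 else 0)))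
        = (∑ a, ∑ c, pdv j (T b a c) q * q.2 a * q.2 c)
          + ((∑ a, ∑ c, (T b a c q * q.2 c) * (if a = j then 1 else 0))
          + (∑ a, ∑ c, (T b a c q * q.2 a) * (if c = j then 1 else 0))) := by
      have : ∀ a c, ((pdv j (T b a c) q * q.2 a
            + T b a c q * (if a = j then 1 else 0)) * q.2 c
            + T b a c q * q.2 a * (if c = j then 1 else 0))
          = pdv j (T b a c) q * q.2 a * q.2 c
            + ((T b a c q * q.2 c) * (if a = j then 1 else 0)
            + (T b a c q * q.2 a) * (if c = j then 1 else 0)) := fun a c => by ring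
      rw [sumc fun a => sumc fun c => this a c]
      simp only [Finset.sum_add_distrib]
    rw [hsplit]
    congr 1
    congr 1
    · rw [Finset.sum_comm]
      refine sumc fun c => ?_
      exact sum_delta' (fun a => T b a c q * q.2 c) j
    · exact sumc fun a => sum_delta' (fun c => T b a c q * q.2 a) j
  have perb : ∀ b, (pdv j (gdn L r b) q * (∑ a, ∑ c, T b a c q * q.2 a * q.2 c)
        + gdn L r b q * (∑ a, ∑ c, ((pdv j (T b a c) q * q.2 a
          + T b a c q * (if a = j then 1 else 0)) * q.2 c
          + T b a c q * q.2 a * (if c = j then 1 else 0))))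
      = pdv j (gdn L r b) q * (∑ a, ∑ c, T b a c q * q.2 a * q.2 c)
        + ((∑ a, ∑ c, gdn L r b q * (pdv j (T b a c) q * q.2 a * q.2 c))
        + ((∑ c, gdn L r b q * (T b j c q * q.2 c))
        + (∑ a, gdn L r b q * (T b a j q * q.2 a)))) := by
    intro b
    rw [hinner b]
    simp only [mul_add, Finset.mul_sum]
  rw [sumc perb]
  simp only [Finset.sum_add_distrib]

end GaugeAux4

theorem stmt15
    (n : ℕ) (hn : 2 ≤ n)
    (L V : Fam n) (ginv : Fin n → Fin n → Pt n → ℝ)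
    (hL : ∀ i, ContDiff ℝ (⊤ : ℕ∞) (L i))
    (hV : ∀ i, ContDiff ℝ (⊤ : ℕ∞) (V i))
    (hginvSm : ∀ i j, ContDiff ℝ (⊤ : ℕ∞) (ginv i j))
    (hLeft : ∀ q : Pt n, lamInv V (lam L q) = q)
    (hRight : ∀ q : Pt n, lam L (lamInv V q) = q)
    (hginv : ∀ (q : Pt n) (s k : Fin n), (∑ r, ginv s r q * gdn L r k q) = kron s k)
    (Γ : Conn n)
    (hΓ : ∀ k i j, ContDiff ℝ (⊤ : ℕ∞) (Γ k i j))
    (hΓsym : ∀ (k i j : Fin n) (q : Pt n), Γ k i j q = Γ k j i q)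
    (Φ : Fam n) (hΦ : ∀ i, ContDiff ℝ (⊤ : ℕ∞) (Φ i))
    (T : Conn n)
    (hT : ∀ k i j, ContDiff ℝ (⊤ : ℕ∞) (T k i j))
    (hTsym : ∀ (k i j : Fin n) (q : Pt n), T k i j q = T k j i q) :
    ∀ (q : Pt n) (k : Fin n),
      alphaV L ginv (addT Γ T) Φ k q = alphaV L ginv Γ Φ k q := by
  intro q k
  -- term 1
  have e1 : (∑ r, ginv r k q * Uv L ginv (addT Γ T) Φ r q)
      = (∑ r, ginv r k q * Uv L ginv Γ Φ r q)
        + ∑ r, ∑ j, ∑ b, ginv r k q * (Lup L ginv j q * (T b r j q * L b q)) := by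
    simp only [Uv_addT hginv, mul_add, Finset.mul_sum, Finset.sum_add_distrib]
  -- term 2
  have e2 : (∑ r, q.2 r * vVec (addT Γ T) r (Lup L ginv) k q)
      = (∑ r, q.2 r * vVec Γ r (Lup L ginv) k q)
        - (∑ r, ∑ a, ∑ b, q.2 r * (q.2 a * T b a r q * pdv b (Lup L ginv k) q))
        + ∑ r, ∑ a, q.2 r * (T k r a q * Lup L ginv a q) := by
    simp only [vVec_addT, mul_sub, mul_add, Finset.mul_sum, Finset.sum_sub_distrib,
      Finset.sum_add_distrib]
  -- term 3
  have e3 : (∑ j, Fvec (addT Γ T) Φ j q * pdv j (Lup L ginv k) q)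
      = (∑ j, Fvec Γ Φ j q * pdv j (Lup L ginv k) q)
        + ∑ j, ∑ a, ∑ b, T j a b q * q.2 a * q.2 b * pdv j (Lup L ginv k) q := by
    simp only [Fvec_addT, add_mul, Finset.sum_mul, Finset.sum_add_distrib]
  -- term 4
  have hv4 : ∀ (j s r : Fin n), pdv j (vCov (addT Γ T) s L r) q
      = pdv j (vCov Γ s L r) q - pdv j (gX L T s r) q := by
    intro j s r
    rw [show vCov (addT Γ T) s L r = (fun q => vCov Γ s L r q - gX L T s r q) from
      funext fun q' => vCov_addT s r q']
    exact pdv_sub ((cd_vCov hL hΓ s r).dAt q) ((cd_gX hL hT s r).dAt q) j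
  have e4 : (∑ j, ∑ r, ∑ s, Lup L ginv r q * ginv j k q * q.2 s
        * pdv j (vCov (addT Γ T) s L r) q)
      = (∑ j, ∑ r, ∑ s, Lup L ginv r q * ginv j k q * q.2 s * pdv j (vCov Γ s L r) q)
        - (∑ j, ∑ r, ∑ s, ∑ b, Lup L ginv r q * ginv j k q * q.2 s
            * (T b j s q * gdn L r b q))
        - (∑ j, ∑ r, ∑ s, ∑ a, ∑ b, Lup L ginv r q * ginv j k q * q.2 s
            * (q.2 a * pdv j (T b a s) q * gdn L r b q))
        - (∑ j, ∑ r, ∑ s, ∑ a, ∑ b, Lup L ginv r q * ginv j k q * q.2 s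
            * (q.2 a * T b a s q * pdv j (gdn L r b) q))
        - (∑ j, ∑ r, ∑ s, ∑ b, Lup L ginv r q * ginv j k q * q.2 s
            * (pdv j (T b s r) q * L b q))
        - (∑ j, ∑ r, ∑ s, ∑ b, Lup L ginv r q * ginv j k q * q.2 s
            * (T b s r q * gdn L b j q)) := by
    simp only [hv4, pdv_gX' hL hT, mul_sub, mul_add, Finset.mul_sum,
      Finset.sum_sub_distrib, Finset.sum_add_distrib]
    ring
  -- term 5
  have hv5 : ∀ (j r : Fin n), pdv j (Fcov L (addT Γ T) Φ r) q
      = pdv j (Fcov L Γ Φ r) q + pdv j (gY L T r) q := by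
    intro j r
    rw [show Fcov L (addT Γ T) Φ r = (fun q => Fcov L Γ Φ r q + gY L T r q) from
      funext fun q' => Fcov_addT r q']
    exact pdv_add ((cd_Fcov hL hΓ hΦ r).dAt q) ((cd_gY hL hT r).dAt q) j
  have e5 : (∑ j, ∑ r, Lup L ginv r q * ginv j k q * pdv j (Fcov L (addT Γ T) Φ r) q)
      = (∑ j, ∑ r, Lup L ginv r q * ginv j k q * pdv j (Fcov L Γ Φ r) q)
        + (∑ j, ∑ r, ∑ b, ∑ a, ∑ c, Lup L ginv r q * ginv j k q
            * (pdv j (gdn L r b) q * (T b a c q * q.2 a * q.2 c)))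
        + (∑ j, ∑ r, ∑ b, ∑ a, ∑ c, Lup L ginv r q * ginv j k q
            * (gdn L r b q * (pdv j (T b a c) q * q.2 a * q.2 c)))
        + (∑ j, ∑ r, ∑ b, ∑ c, Lup L ginv r q * ginv j k q
            * (gdn L r b q * (T b j c q * q.2 c)))
        + (∑ j, ∑ r, ∑ b, ∑ a, Lup L ginv r q * ginv j k q
            * (gdn L r b q * (T b a j q * q.2 a))) := by
    simp only [hv5, pdv_gY' hL hT, mul_add, Finset.mul_sum, Finset.sum_add_distrib]
    ring
  -- term 6
  have e6 : (∑ j, ∑ r, Lup L ginv r q * ginv j k q * vCov (addT Γ T) j L r q)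
      = (∑ j, ∑ r, Lup L ginv r q * ginv j k q * vCov Γ j L r q)
        - (∑ j, ∑ r, ∑ a, ∑ b, Lup L ginv r q * ginv j k q
            * (q.2 a * T b a j q * gdn L r b q))
        - (∑ j, ∑ r, ∑ b, Lup L ginv r q * ginv j k q * (T b j r q * L b q)) := by
    simp only [vCov_addT, gX, mul_sub, mul_add, Finset.mul_sum,
      Finset.sum_sub_distrib, Finset.sum_add_distrib]
    ring
  -- term 7
  have e7 : (∑ j, ∑ m, ∑ r, ∑ s, ginv m k q * L s q * Dv (addT Γ T) s r j m q
        * Lup L ginv r q * q.2 j)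
      = (∑ j, ∑ m, ∑ r, ∑ s, ginv m k q * L s q * Dv Γ s r j m q
          * Lup L ginv r q * q.2 j)
        - (∑ j, ∑ m, ∑ r, ∑ s, ginv m k q * L s q * pdv m (T s j r) q
            * Lup L ginv r q * q.2 j) := by
    simp only [Dv_addT hΓ hT, mul_sub, sub_mul, Finset.sum_sub_distrib]
  -- cancellations
  have c1 : (∑ r, ∑ j, ∑ b, ginv r k q * (Lup L ginv j q * (T b r j q * L b q)))
      = (∑ j, ∑ r, ∑ b, Lup L ginv r q * ginv j k q * (T b j r q * L b q)) :=
    sumc fun r => sumc fun j => sumc fun b => by ring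
  have c2 : (∑ r, ∑ a, ∑ b, q.2 r * (q.2 a * T b a r q * pdv b (Lup L ginv k) q))
      = (∑ j, ∑ a, ∑ b, T j a b q * q.2 a * q.2 b * pdv j (Lup L ginv k) q) := by
    rw [show (∑ r, ∑ a, ∑ b, q.2 r * (q.2 a * T b a r q * pdv b (Lup L ginv k) q))
        = ∑ b, ∑ a, ∑ r, q.2 r * (q.2 a * T b a r q * pdv b (Lup L ginv k) q) from
      sum_swap13 _]
    exact sumc fun b => sumc fun a => sumc fun r => by ring
  have c3 : (∑ j, ∑ r, ∑ s, ∑ b, Lup L ginv r q * ginv j k q * q.2 s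
        * (T b s r q * gdn L b j q))
      = (∑ r, ∑ a, q.2 r * (T k r a q * Lup L ginv a q)) := by
    rw [show (∑ j, ∑ r, ∑ s, ∑ b, Lup L ginv r q * ginv j k q * q.2 s
          * (T b s r q * gdn L b j q))
        = ∑ r, ∑ s, ∑ b, ∑ j, Lup L ginv r q * ginv j k q * q.2 s
          * (T b s r q * gdn L b j q) from sum_rot4 _]
    have step : ∀ r s, (∑ b, ∑ j, Lup L ginv r q * ginv j k q * q.2 s
          * (T b s r q * gdn L b j q))
        = Lup L ginv r q * q.2 s * T k s r q := by
      intro r s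
      have hb : ∀ b, (∑ j, Lup L ginv r q * ginv j k q * q.2 s
            * (T b s r q * gdn L b j q))
          = (Lup L ginv r q * q.2 s * T b s r q) * kron b k := by
        intro b
        rw [show (∑ j, Lup L ginv r q * ginv j k q * q.2 s * (T b s r q * gdn L b j q))
            = (Lup L ginv r q * q.2 s * T b s r q) * ∑ j, gdn L b j q * ginv j k q from by
          rw [Finset.mul_sum]; exact sumc fun j => by ring]
        rw [gdn_ginv hginv]
      rw [sumc hb, sum_mul_kron (fun b => Lup L ginv r q * q.2 s * T b s r q) k]
    rw [sumc fun r => sumc fun s => step r s, Finset.sum_comm]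
    exact sumc fun s => sumc fun r => by ring
  have c4 : (∑ j, ∑ r, ∑ s, ∑ b, Lup L ginv r q * ginv j k q * q.2 s
        * (T b j s q * gdn L r b q))
      = (∑ j, ∑ r, ∑ b, ∑ c, Lup L ginv r q * ginv j k q
          * (gdn L r b q * (T b j c q * q.2 c))) := by
    refine sumc fun j => sumc fun r => ?_
    rw [Finset.sum_comm]
    exact sumc fun b => sumc fun s => by ring
  have c5 : (∑ j, ∑ r, ∑ s, ∑ a, ∑ b, Lup L ginv r q * ginv j k q * q.2 s
        * (q.2 a * pdv j (T b a s) q * gdn L r b q))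
      = (∑ j, ∑ r, ∑ b, ∑ a, ∑ c, Lup L ginv r q * ginv j k q
          * (gdn L r b q * (pdv j (T b a c) q * q.2 a * q.2 c))) := by
    refine sumc fun j => sumc fun r => ?_
    rw [show (∑ s, ∑ a, ∑ b, Lup L ginv r q * ginv j k q * q.2 s
          * (q.2 a * pdv j (T b a s) q * gdn L r b q))
        = ∑ b, ∑ a, ∑ s, Lup L ginv r q * ginv j k q * q.2 s
          * (q.2 a * pdv j (T b a s) q * gdn L r b q) from sum_swap13 _]
    exact sumc fun b => sumc fun a => sumc fun s => by ring
  have c6 : (∑ j, ∑ r, ∑ s, ∑ a, ∑ b, Lup L ginv r q * ginv j k q * q.2 s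
        * (q.2 a * T b a s q * pdv j (gdn L r b) q))
      = (∑ j, ∑ r, ∑ b, ∑ a, ∑ c, Lup L ginv r q * ginv j k q
          * (pdv j (gdn L r b) q * (T b a c q * q.2 a * q.2 c))) := by
    refine sumc fun j => sumc fun r => ?_
    rw [show (∑ s, ∑ a, ∑ b, Lup L ginv r q * ginv j k q * q.2 s
          * (q.2 a * T b a s q * pdv j (gdn L r b) q))
        = ∑ b, ∑ a, ∑ s, Lup L ginv r q * ginv j k q * q.2 s
          * (q.2 a * T b a s q * pdv j (gdn L r b) q) from sum_swap13 _]
    exact sumc fun b => sumc fun a => sumc fun s => by ring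
  have c7 : (∑ j, ∑ r, ∑ s, ∑ b, Lup L ginv r q * ginv j k q * q.2 s
        * (pdv j (T b s r) q * L b q))
      = (∑ j, ∑ m, ∑ r, ∑ s, ginv m k q * L s q * pdv m (T s j r) q
          * Lup L ginv r q * q.2 j) := by
    rw [show (∑ j, ∑ r, ∑ s, ∑ b, Lup L ginv r q * ginv j k q * q.2 s
          * (pdv j (T b s r) q * L b q))
        = ∑ s, ∑ j, ∑ r, ∑ b, Lup L ginv r q * ginv j k q * q.2 s
          * (pdv j (T b s r) q * L b q) from sum_comm3' _]
    exact sumc fun s => sumc fun j => sumc fun r => sumc fun b => by ring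
  have c8 : (∑ j, ∑ r, ∑ a, ∑ b, Lup L ginv r q * ginv j k q
        * (q.2 a * T b a j q * gdn L r b q))
      = (∑ j, ∑ r, ∑ b, ∑ a, Lup L ginv r q * ginv j k q
          * (gdn L r b q * (T b a j q * q.2 a))) := by
    refine sumc fun j => sumc fun r => ?_
    rw [Finset.sum_comm]
    exact sumc fun b => sumc fun a => by ring
  unfold alphaV
  rw [e1, e2, e3, e4, e5, e6, e7]
  linarith [c1, c2, c3, c4, c5, c6, c7, c8]
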